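/- Suppose P_SL < P_ID, P_SL < P_B, P_SL < P_ST, and let θ ∈ (0,1], λ > 0, h > 0, u ≥ 0 be fixed. Define E[P](N) = [P_B·h + ((1-θ)/λ)·P_ID + θ·((N/λ)·P_SL + u·P_ST)] / [h + θ·((N-1)/λ + u) + 1/λ] for N ≥ 1. Then E[P](N) is strictly decreasing in N, and lim_{N→∞} E[P](N) = P_SL < E[P](N) for every finite N ≥ 1. -/
import Mathlib


open Filter

/-- With `P_SL` smaller than the other power rates, the energy consumption rate
`E[P](N)` is strictly decreasing in `N` on `[1, ∞)`, tends to `P_SL` as `N → ∞`,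
and exceeds `P_SL` at every finite `N ≥ 1`. -/
theorem stmt_4 (PB PID PSL PST θ lam h u : ℝ)
    (hPB : 0 < PB) (hPID : 0 < PID) (hPSL : 0 < PSL) (hPST : 0 < PST)
    (h1 : PSL < PID) (h2 : PSL < PB) (h3 : PSL < PST)
    (hθ0 : 0 < θ) (hθ1 : θ ≤ 1) (hlam : 0 < lam) (hh : 0 < h) (hu : 0 ≤ u) :
    StrictAntiOn (fun N : ℝ =>
        (PB * h + ((1 - θ) / lam) * PID + θ * ((N / lam) * PSL + u * PST)) /
          (h + θ * ((N - 1) / lam + u) + 1 / lam)) (Set.Ici 1) ∧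
    Tendsto (fun N : ℝ =>
        (PB * h + ((1 - θ) / lam) * PID + θ * ((N / lam) * PSL + u * PST)) /
          (h + θ * ((N - 1) / lam + u) + 1 / lam)) atTop (nhds PSL) ∧
    ∀ N : ℝ, 1 ≤ N →
      PSL < (PB * h + ((1 - θ) / lam) * PID + θ * ((N / lam) * PSL + u * PST)) /
          (h + θ * ((N - 1) / lam + u) + 1 / lam) := by
  set K : ℝ := (PB - PSL) * h + ((1 - θ) / lam) * (PID - PSL) + θ * u * (PST - PSL) with hKdef
  have hK : 0 < K := by
    have t1 : 0 < (PB - PSL) * h := by nlinarith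
    have t2 : 0 ≤ ((1 - θ) / lam) * (PID - PSL) := by
      apply mul_nonneg
      · apply div_nonneg <;> linarith
      · linarith
    have t3 : 0 ≤ θ * u * (PST - PSL) := by
      apply mul_nonneg
      · positivity
      · linarith
    rw [hKdef]; linarith [t1, t2, t3]
  have hden : ∀ N : ℝ, 1 ≤ N → 0 < h + θ * ((N - 1) / lam + u) + 1 / lam := by
    intro N hN
    have : 0 ≤ θ * ((N - 1) / lam + u) := by
      apply mul_nonneg hθ0.le
      have : 0 ≤ (N - 1) / lam := by apply div_nonneg <;> linarith
      linarith
    have : 0 < 1 / lam := by positivity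
    linarith
  have hkey : ∀ N : ℝ, (h + θ * ((N - 1) / lam + u) + 1 / lam) ≠ 0 →
      (PB * h + ((1 - θ) / lam) * PID + θ * ((N / lam) * PSL + u * PST)) /
          (h + θ * ((N - 1) / lam + u) + 1 / lam)
        = PSL + K / (h + θ * ((N - 1) / lam + u) + 1 / lam) := by
    intro N hne
    rw [div_eq_iff hne, add_mul, div_mul_cancel₀ _ hne, hKdef]
    ring
  refine ⟨?_, ?_, ?_⟩
  · intro M hM N hN hMN
    simp only [Set.mem_Ici] at hM hN
    have hdM := hden M hM
    have hdN := hden N hN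
    dsimp only
    rw [hkey M hdM.ne', hkey N hdN.ne']
    have hlt : h + θ * ((M - 1) / lam + u) + 1 / lam < h + θ * ((N - 1) / lam + u) + 1 / lam := by
      have h4 : (M - 1) / lam < (N - 1) / lam :=
        (div_lt_div_iff_of_pos_right hlam).mpr (by linarith)
      have h5 : θ * ((M - 1) / lam + u) < θ * ((N - 1) / lam + u) :=
        mul_lt_mul_of_pos_left (by linarith) hθ0
      linarith
    have := div_lt_div_of_pos_left hK hdM hlt
    linarith
  · have hdtop : Tendsto (fun N : ℝ => h + θ * ((N - 1) / lam + u) + 1 / lam) atTop atTop := by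
      have heq : (fun N : ℝ => h + θ * ((N - 1) / lam + u) + 1 / lam)
          = fun N : ℝ => (θ / lam) * N + (h + θ * (u - 1 / lam) + 1 / lam) := by
        funext N; field_simp; ring
      rw [heq]
      exact tendsto_atTop_add_const_right _ _ (tendsto_id.const_mul_atTop (by positivity))
    have h0 : Tendsto (fun N : ℝ => K / (h + θ * ((N - 1) / lam + u) + 1 / lam)) atTop (nhds 0) :=
      tendsto_const_nhds.div_atTop hdtop
    have : Tendsto (fun N : ℝ => PSL + K / (h + θ * ((N - 1) / lam + u) + 1 / lam)) atTop
        (nhds (PSL + 0)) := tendsto_const_nhds.add h0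
    rw [add_zero] at this
    refine this.congr' ?_
    filter_upwards [eventually_ge_atTop (1 : ℝ)] with N hN
    exact (hkey N (hden N hN).ne').symm
  · intro N hN
    have hdN := hden N hN
    rw [hkey N hdN.ne']
    have : 0 < K / (h + θ * ((N - 1) / lam + u) + 1 / lam) := by positivity
    linarith
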